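/- Stability of subgradient flows under perturbation of the energy: Let H be a real Hilbert space, T > 0, δ ≥ 0, and let E₁, E₂ : H → ℝ satisfy |E₁(w) − E₂(w)| ≤ δ for all w ∈ H. Let u, v : [0,T] → H be continuous on [0,T] and differentiable at every t ∈ (0,T) with u(0) = v(0), and suppose that for every t ∈ (0,T) and every w ∈ H the variational inequalities ⟨−u'(t), w − u(t)⟩ + E₁(u(t)) ≤ E₁(w) and ⟨−v'(t), w − v(t)⟩ + E₂(v(t)) ≤ E₂(w) hold. Then ‖u(t) − v(t)‖ ≤ 2 (δ t)^{1/2} for every t ∈ [0,T]; in particular sup_{t∈[0,T]} ‖u(t) − v(t)‖ ≤ 2 (δ T)^{1/2}. -/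

import Mathlib

open RealInnerProductSpace

/-- Stability of subgradient flows under perturbation of the energy: if
`|E₁(w) − E₂(w)| ≤ δ` for all `w`, `u(0) = v(0)`, and `u, v` solve the
subgradient flow variational inequalities for `E₁` and `E₂` respectively,
then `‖u(t) − v(t)‖ ≤ 2 (δ t)^{1/2}` for every `t ∈ [0,T]`. -/
theorem stmt9 {H : Type*} [NormedAddCommGroup H] [InnerProductSpace ℝ H]
    (T δ : ℝ) (hT : 0 < T) (hδ : 0 ≤ δ)
    (E₁ E₂ : H → ℝ) (hE : ∀ w, |E₁ w - E₂ w| ≤ δ)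
    (u v u' v' : ℝ → H)
    (hu : ContinuousOn u (Set.Icc 0 T)) (hv : ContinuousOn v (Set.Icc 0 T))
    (hu' : ∀ t ∈ Set.Ioo 0 T, HasDerivAt u (u' t) t)
    (hv' : ∀ t ∈ Set.Ioo 0 T, HasDerivAt v (v' t) t)
    (h0 : u 0 = v 0)
    (hvi1 : ∀ t ∈ Set.Ioo 0 T, ∀ w, ⟪-u' t, w - u t⟫ + E₁ (u t) ≤ E₁ w)
    (hvi2 : ∀ t ∈ Set.Ioo 0 T, ∀ w, ⟪-v' t, w - v t⟫ + E₂ (v t) ≤ E₂ w) :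
    ∀ t ∈ Set.Icc 0 T, ‖u t - v t‖ ≤ 2 * (δ * t) ^ ((1:ℝ)/2) := by
  set g : ℝ → ℝ := fun t => ⟪u t - v t, u t - v t⟫ - 4 * δ * t with hg
  have hgd : ∀ t ∈ Set.Ioo 0 T,
      HasDerivAt g (2 * ⟪u' t - v' t, u t - v t⟫ - 4 * δ) t := by
    intro t ht
    have h1 : HasDerivAt (fun t => u t - v t) (u' t - v' t) t :=
      (hu' t ht).sub (hv' t ht)
    have h2 := (h1.inner ℝ h1)
    have h3 : HasDerivAt (fun t : ℝ => 4 * δ * t) (4 * δ) t := by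
      simpa using (hasDerivAt_id t).const_mul (4 * δ)
    have := h2.sub h3
    refine this.congr_deriv ?_
    rw [real_inner_comm]
    ring
  have key : ∀ t ∈ Set.Ioo 0 T, ⟪u' t - v' t, u t - v t⟫ ≤ 2 * δ := by
    intro t ht
    have hA := hvi1 t ht (v t)
    have hB := hvi2 t ht (u t)
    have hA' : ⟪u' t, u t - v t⟫ ≤ E₁ (v t) - E₁ (u t) := by
      have : ⟪-u' t, v t - u t⟫ = ⟪u' t, u t - v t⟫ := by
        rw [inner_neg_left, ← inner_neg_right, neg_sub]
      linarith [hA, this.symm.le, this.le]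
    have hB' : -⟪v' t, u t - v t⟫ ≤ E₂ (u t) - E₂ (v t) := by
      have : ⟪-v' t, u t - v t⟫ = -⟪v' t, u t - v t⟫ := inner_neg_left _ _
      linarith [hB, this.le, this.symm.le]
    have h1 := abs_le.mp (hE (u t))
    have h2 := abs_le.mp (hE (v t))
    have : ⟪u' t - v' t, u t - v t⟫ = ⟪u' t, u t - v t⟫ - ⟪v' t, u t - v t⟫ := by
      rw [inner_sub_left]
    linarith [h1.1, h1.2, h2.1, h2.2]
  have hanti : AntitoneOn g (Set.Icc 0 T) := by
    apply antitoneOn_of_deriv_nonpos (convex_Icc 0 T)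
    · apply ContinuousOn.sub
      · exact (hu.sub hv).inner (hu.sub hv)
      · exact (continuous_const.mul continuous_id).continuousOn
    · intro t ht
      rw [interior_Icc] at ht
      exact ((hgd t ht).differentiableAt).differentiableWithinAt
    · intro t ht
      rw [interior_Icc] at ht
      rw [(hgd t ht).deriv]
      have := key t ht
      linarith
  intro t ht
  have hsq : ‖u t - v t‖ ^ 2 ≤ 4 * δ * t := by
    have := hanti (Set.left_mem_Icc.mpr hT.le) ht ht.1
    have hg0 : g 0 = 0 := by simp [hg, h0]
    rw [hg0] at this
    have : ⟪u t - v t, u t - v t⟫ ≤ 4 * δ * t := by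
      simp [hg] at this; rw [real_inner_self_eq_norm_sq]; linarith
    rwa [real_inner_self_eq_norm_sq] at this
  have hδt : (0:ℝ) ≤ δ * t := mul_nonneg hδ ht.1
  calc ‖u t - v t‖ ≤ Real.sqrt (4 * δ * t) := Real.le_sqrt_of_sq_le hsq
      _ = 2 * (δ * t) ^ ((1:ℝ)/2) := by
        rw [show (4:ℝ) * δ * t = 2^2 * (δ * t) by ring, Real.sqrt_mul (by positivity),
          Real.sqrt_sq (by norm_num), Real.sqrt_eq_rpow]
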